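/- For every θ ∈ (0, π/2), the lower-left entry c(θ) = sin2θ·cotθ of Y₁(θ) is nonzero, and the isometric circle of Y₁(θ), namely the circle {z ∈ ℂ : |c(θ)z + d(θ)| = 1} where d(θ) is the lower-right entry, is exactly the circle of radius r(θ) centred at −conj(ζ(θ)): that is, −d(θ)/c(θ) = −conj(ζ(θ)) and 1/|c(θ)| = r(θ). -/

import Mathlib

open Matrix Complex

/-- For every θ ∈ (0, π/2), the lower-left entry c(θ) = sin2θ·cotθ of
Y₁(θ) is nonzero, and the isometric circle of Y₁(θ), namely {z : |c(θ)z + d(θ)| = 1}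
where d(θ) is the lower-right entry, is exactly the circle of radius r(θ) centred at
−conj(ζ(θ)): that is, −d(θ)/c(θ) = −conj(ζ(θ)) and 1/|c(θ)| = r(θ). -/
theorem stmt14 (θ : ℝ) (hθ : θ ∈ Set.Ioo 0 (Real.pi / 2)) :
    let t : ℝ := Real.tan θ
    let r : ℝ := t / Real.sin (2 * θ)
    let ζ : ℂ := (↑(-(t * Real.cos (2 * θ) / Real.sin (2 * θ))) : ℂ) + (↑(1 + t) : ℂ) * I
    let c2 : ℝ := Real.cos (2 * θ)
    let s2 : ℝ := Real.sin (2 * θ)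
    let c : ℂ := (↑(s2 * Real.cot θ) : ℂ)
    let d : ℂ := -(c2 : ℂ) - (↑(1 + c2 + s2) : ℂ) * I
    c ≠ 0 ∧ -(d / c) = -(starRingEnd ℂ ζ) ∧ 1 / ‖c‖ = r := by
  intro t r ζ c2 s2 c d
  obtain ⟨h0, h1⟩ := hθ
  have hpi := Real.pi_pos
  have hcos : Real.cos θ > 0 := Real.cos_pos_of_mem_Ioo ⟨by linarith, h1⟩
  have hsin : Real.sin θ > 0 := Real.sin_pos_of_pos_of_lt_pi h0 (by linarith)
  have hp := Real.sin_sq_add_cos_sq θ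
  have hs2 : Real.sin (2 * θ) = 2 * Real.sin θ * Real.cos θ := Real.sin_two_mul θ
  have hc2 : Real.cos (2 * θ) = Real.cos θ ^ 2 - Real.sin θ ^ 2 := Real.cos_two_mul' θ
  have ht : Real.tan θ = Real.sin θ / Real.cos θ := Real.tan_eq_sin_div_cos θ
  have hcval : s2 * Real.cot θ = 2 * Real.cos θ ^ 2 := by
    rw [show s2 = Real.sin (2*θ) from rfl, Real.cot_eq_cos_div_sin, hs2]
    field_simp
  have hcne : (2 : ℝ) * Real.cos θ ^ 2 ≠ 0 := by positivity
  have hcC : c = ((2 * Real.cos θ ^ 2 : ℝ) : ℂ) := by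
    rw [show c = ((s2 * Real.cot θ : ℝ) : ℂ) from rfl, hcval]
  have hcne' : c ≠ 0 := by rw [hcC]; exact_mod_cast hcne
  have e1 : (Real.tan θ * Real.cos (2 * θ) / Real.sin (2 * θ)) * (2 * Real.cos θ ^ 2)
      = Real.cos (2 * θ) := by
    rw [hs2, hc2, ht]; field_simp
  have e2 : (1 + Real.tan θ) * (2 * Real.cos θ ^ 2)
      = 1 + Real.cos (2 * θ) + Real.sin (2 * θ) := by
    rw [hs2, hc2, ht]; field_simp; linear_combination hp
  have e1C : ((Real.tan θ * Real.cos (2 * θ) / Real.sin (2 * θ) : ℝ) : ℂ) * ((2 * Real.cos θ ^ 2 : ℝ) : ℂ)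
      = ((Real.cos (2 * θ) : ℝ) : ℂ) := by exact_mod_cast congrArg Complex.ofReal e1
  have e2C : (((1 + Real.tan θ : ℝ)) : ℂ) * ((2 * Real.cos θ ^ 2 : ℝ) : ℂ)
      = ((1 + Real.cos (2 * θ) + Real.sin (2 * θ) : ℝ) : ℂ) := by
    exact_mod_cast congrArg Complex.ofReal e2
  refine ⟨hcne', ?_, ?_⟩
  · rw [neg_inj, div_eq_iff hcne', hcC]
    show -((Real.cos (2*θ) : ℝ) : ℂ) - ((1 + Real.cos (2*θ) + Real.sin (2*θ) : ℝ) : ℂ) * I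
        = (starRingEnd ℂ) (((-(Real.tan θ * Real.cos (2*θ) / Real.sin (2*θ)) : ℝ) : ℂ)
            + (((1 + Real.tan θ : ℝ)) : ℂ) * I) * ((2 * Real.cos θ ^ 2 : ℝ) : ℂ)
    simp only [map_add, RingHom.map_mul, map_neg, Complex.conj_ofReal, Complex.conj_I,
      Complex.ofReal_neg]
    linear_combination e1C + I * e2C
  · rw [hcC, Complex.norm_real, Real.norm_eq_abs, abs_of_pos (by positivity),
      show r = Real.tan θ / Real.sin (2*θ) from rfl, hs2, ht]
    field_simp
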